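/- Let p ≥ 2 and work in R = ℚ[y₁,…,y_p, z]. Let I ⊆ R be the ideal generated by the elementary symmetric polynomials e₁,…,e_{p+1} of the p+1 variables y₁,…,y_p, z. Then e₂(y₁,…,y_p) = Σ_{1≤i<j≤p} y_i y_j does not belong to I. -/

import Mathlib

open MvPolynomial

/-- Auxiliary: the `k`-th elementary symmetric function of the multiset
`{C c * X : c ∈ s}` in `ℂ[X]` equals `C (s.esymm k) * X ^ k`. -/
lemma esymm_map_C_mul_X (s : Multiset ℂ) (k : ℕ) :
    (s.map fun c => Polynomial.C c * Polynomial.X).esymm k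
      = Polynomial.C (s.esymm k) * Polynomial.X ^ k := by
  unfold Multiset.esymm
  rw [Multiset.powersetCard_map, Multiset.map_map]
  have h1 : ((s.powersetCard k).map
        ((fun (t : Multiset (Polynomial ℂ)) => t.prod) ∘
          Multiset.map fun c => Polynomial.C c * Polynomial.X))
      = (s.powersetCard k).map fun t => Polynomial.C t.prod * Polynomial.X ^ k := by
    refine Multiset.map_congr rfl fun t ht => ?_
    have hcard : Multiset.card t = k := (Multiset.mem_powersetCard.1 ht).2
    simp only [Function.comp_apply]
    rw [Multiset.prod_map_mul, Multiset.map_const', Multiset.prod_replicate, hcard,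
      ← map_multiset_prod (Polynomial.C : ℂ →+* Polynomial ℂ)]
  rw [h1]
  rw [show ((s.powersetCard k).map fun t => Polynomial.C t.prod * Polynomial.X ^ k)
      = ((s.powersetCard k).map fun t =>
          (Polynomial.C : ℂ →+* Polynomial ℂ) t.prod * Polynomial.X ^ k) from rfl,
    Multiset.sum_map_mul_right]
  congr 1
  rw [show (Multiset.map (fun t : Multiset ℂ => Polynomial.C t.prod) (s.powersetCard k))
      = Multiset.map Polynomial.C (Multiset.map Multiset.prod (s.powersetCard k)) from
    (Multiset.map_map _ _ _).symm]
  exact (map_multiset_sum (Polynomial.C : ℂ →+* Polynomial ℂ) _).symm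

/-- In `ℚ[y₁,…,y_p,z]` (`p ≥ 2`), the polynomial `e₂(y₁,…,y_p)` does not belong
to the ideal generated by the elementary symmetric polynomials `e₁,…,e_{p+1}`
of the `p+1` variables `y₁,…,y_p,z`. -/
theorem esymm_two_not_mem_span (p : ℕ) (hp : 2 ≤ p) :
    rename (Fin.castSucc : Fin p → Fin (p + 1)) (esymm (Fin p) ℚ 2)
      ∉ Ideal.span (Set.range fun j : Fin (p + 1) =>
          esymm (Fin (p + 1)) ℚ ((j : ℕ) + 1)) := by
  intro hmem
  obtain ⟨q, rfl⟩ : ∃ q, p = q + 2 := ⟨p - 2, by omega⟩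
  set n : ℕ := q + 3 with hn
  haveI : NeZero n := ⟨by omega⟩
  have hnpos : 0 < n := by omega
  set ω : ℂ := Complex.exp (2 * Real.pi * Complex.I / n) with hω
  have hζ : IsPrimitiveRoot ω n := Complex.isPrimitiveRoot_exp n (by omega)
  have hωne : ω ≠ 0 := Complex.exp_ne_zero _
  -- variable assignments
  set g : Fin n → ℂ := fun j => -ω ^ (j : ℕ) with hg
  set f : Fin n → Polynomial ℂ := fun j => Polynomial.C (g j) * Polynomial.X with hf
  -- the multiset of values in ℂ
  set N : Multiset ℂ := (Finset.univ.val : Multiset (Fin n)).map g with hN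
  have hcardN : Multiset.card N = n := by simp [hN]; omega
  -- the product identity giving Vieta
  have hXC : ∀ j : Fin n, Polynomial.X + Polynomial.C (g j)
      = Polynomial.X - Polynomial.C (ω ^ (j : ℕ)) := by
    intro j; rw [hg]; simp [sub_eq_add_neg]
  have hprodFin : (∏ j : Fin n, (Polynomial.X - Polynomial.C (ω ^ (j : ℕ))))
      = Polynomial.X ^ n - 1 := by
    rw [Polynomial.X_pow_sub_one_eq_prod hnpos hζ]
    refine Finset.prod_nbij (fun j : Fin n => ω ^ (j : ℕ)) ?_ ?_ ?_ ?_
    · intro j _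
      refine (Polynomial.mem_nthRootsFinset hnpos 1).2 ?_
      rw [← pow_mul, mul_comm, pow_mul, hζ.pow_eq_one, one_pow]
    · intro i _ j _ h
      exact Fin.ext (hζ.pow_inj i.isLt j.isLt h)
    · rintro ζ' hζ'
      have h1 : ζ' ^ n = 1 :=
        (Polynomial.mem_nthRootsFinset hnpos 1).1 (by simpa using hζ')
      obtain ⟨i, hi, rfl⟩ := hζ.eq_pow_of_pow_eq_one h1
      exact ⟨⟨i, hi⟩, by simp, rfl⟩
    · intro j _; rfl
  have hprodN : (N.map fun r => Polynomial.X + Polynomial.C r).prod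
      = Polynomial.X ^ n - 1 := by
    rw [hN, Multiset.map_map, ← hprodFin, ← Finset.prod_eq_multiset_prod]
    exact Finset.prod_congr rfl fun j _ => hXC j
  -- vanishing of the elementary symmetric functions of all n values
  have hesymmN : ∀ k : ℕ, 1 ≤ k → k ≤ q + 2 → N.esymm k = 0 := by
    intro k hk1 hk2
    have hle : n - k ≤ Multiset.card N := by rw [hcardN]; omega
    have h2 := Multiset.prod_X_add_C_coeff N hle
    rw [hprodN, hcardN] at h2
    have h3 : n - (n - k) = k := by omega
    rw [h3] at h2
    rw [← h2]
    rw [Polynomial.coeff_sub, Polynomial.coeff_X_pow, Polynomial.coeff_one,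
      if_neg (by omega), if_neg (by omega), sub_zero]
  -- the multiset of the first q+2 values
  set N' : Multiset ℂ := (Finset.univ.val : Multiset (Fin (q + 2))).map
      (g ∘ Fin.castSucc) with hN'
  have hcardN' : Multiset.card N' = q + 2 := by simp [hN']
  set Q : Polynomial ℂ := ∏ i : Fin (q + 2),
      (Polynomial.X + Polynomial.C (g (Fin.castSucc i))) with hQ
  have hQN' : (N'.map fun r => Polynomial.X + Polynomial.C r).prod = Q := by
    rw [hN', Multiset.map_map, hQ, Finset.prod_eq_multiset_prod]; rfl
  -- split the full product
  have hsplit : Polynomial.X ^ n - 1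
      = Q * (Polynomial.X - Polynomial.C (ω ^ (q + 2))) := by
    rw [← hprodFin, Fin.prod_univ_castSucc]
    congr 1
    rw [hQ]; exact Finset.prod_congr rfl fun i _ => (hXC _).symm
  -- coefficient extractions for Q
  have hQ1 : Q.coeff (q + 1) = N'.esymm 1 := by
    have hle : q + 1 ≤ Multiset.card N' := by omega
    have := Multiset.prod_X_add_C_coeff N' hle
    rw [hQN', hcardN'] at this
    rw [this]; congr 1; omega
  have hQ2 : Q.coeff q = N'.esymm 2 := by
    have hle : q ≤ Multiset.card N' := by omega
    have := Multiset.prod_X_add_C_coeff N' hle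
    rw [hQN', hcardN'] at this
    rw [this]; congr 1; omega
  -- the sum of the first q+2 values
  have hsum : N'.esymm 1 = ω ^ (q + 2) := by
    have hall : ∑ j : Fin n, ω ^ (j : ℕ) = 0 := by
      rw [Fin.sum_univ_eq_sum_range fun j => ω ^ j]
      exact hζ.geom_sum_eq_zero (by omega)
    have hsplitsum : ∑ j : Fin n, ω ^ (j : ℕ)
        = (∑ i : Fin (q + 2), ω ^ ((Fin.castSucc i : Fin n) : ℕ)) + ω ^ (q + 2) := by
      rw [Fin.sum_univ_castSucc (fun j : Fin n => ω ^ (j : ℕ))]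
      norm_num
    have h1 : ∑ i : Fin (q + 2), ω ^ ((Fin.castSucc i : Fin n) : ℕ) = -ω ^ (q + 2) := by
      rw [hsplitsum] at hall; linear_combination hall
    have h2 : N'.esymm 1
        = ∑ i : Fin (q + 2), g (Fin.castSucc i) := by
      rw [← aeval_esymm_eq_multiset_esymm (Fin (q + 2)) ℚ 1 (g ∘ Fin.castSucc),
        esymm_one, map_sum]
      simp
    rw [h2]
    have : ∑ i : Fin (q + 2), g (Fin.castSucc i)
        = -∑ i : Fin (q + 2), ω ^ ((Fin.castSucc i : Fin n) : ℕ) := by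
      simp [hg]
    rw [this, h1, neg_neg]
  -- value of e₂ of the first q+2 values
  have he2 : N'.esymm 2 = ω ^ (q + 2) * ω ^ (q + 2) := by
    have h0 : (Polynomial.X ^ n - 1 : Polynomial ℂ).coeff (q + 1) = 0 := by
      rw [Polynomial.coeff_sub, Polynomial.coeff_X_pow, Polynomial.coeff_one,
        if_neg (by omega), if_neg (by omega), sub_zero]
    rw [hsplit] at h0
    rw [Polynomial.coeff_mul_X_sub_C] at h0
    rw [hQ1, hQ2, hsum] at h0
    linear_combination h0
  -- now push the ideal membership through `aeval f`
  have hmap := Ideal.mem_map_of_mem (MvPolynomial.aeval f).toRingHom hmem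
  rw [Ideal.map_span] at hmap
  have huniv : (Finset.univ.val : Multiset (Fin n)).map f
      = N.map fun c => Polynomial.C c * Polynomial.X := by
    rw [hN, Multiset.map_map]; rfl
  have hspan : Ideal.span ((MvPolynomial.aeval f).toRingHom ''
        Set.range fun j : Fin n => esymm (Fin n) ℚ ((j : ℕ) + 1))
      ≤ Ideal.span {(Polynomial.X : Polynomial ℂ) ^ n} := by
    refine Ideal.span_le.2 ?_
    rintro _ ⟨_, ⟨j, rfl⟩, rfl⟩
    rw [SetLike.mem_coe]
    show (MvPolynomial.aeval f) (esymm (Fin n) ℚ ((j : ℕ) + 1)) ∈ _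
    rw [aeval_esymm_eq_multiset_esymm, huniv, esymm_map_C_mul_X]
    rcases le_or_gt ((j : ℕ) + 1) (q + 2) with h | h
    · rw [hesymmN _ (by omega) h]
      simp
    · have hj : (j : ℕ) + 1 = n := by have := j.isLt; omega
      rw [hj]
      exact Ideal.mem_span_singleton.2 ⟨Polynomial.C (N.esymm n), mul_comm _ _⟩
  have hval : (MvPolynomial.aeval f)
        (rename (Fin.castSucc : Fin (q + 2) → Fin n) (esymm (Fin (q + 2)) ℚ 2))
      = Polynomial.C (N'.esymm 2) * Polynomial.X ^ 2 := by
    rw [aeval_rename, aeval_esymm_eq_multiset_esymm]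
    rw [show (Finset.univ.val : Multiset (Fin (q + 2))).map (f ∘ Fin.castSucc)
        = N'.map fun c => Polynomial.C c * Polynomial.X by
      rw [hN', Multiset.map_map]; rfl]
    exact esymm_map_C_mul_X N' 2
  have hmem2 : Polynomial.C (N'.esymm 2) * Polynomial.X ^ 2
      ∈ Ideal.span {(Polynomial.X : Polynomial ℂ) ^ n} := by
    rw [← hval]
    exact hspan hmap
  have hdvd := Ideal.mem_span_singleton.1 hmem2
  have hne : Polynomial.C (N'.esymm 2) * Polynomial.X ^ 2 ≠ (0 : Polynomial ℂ) := by
    have hc : N'.esymm 2 ≠ 0 := by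
      rw [he2]
      exact mul_ne_zero (pow_ne_zero _ hωne) (pow_ne_zero _ hωne)
    intro h
    apply hc
    have := congrArg (fun r : Polynomial ℂ => r.coeff 2) h
    simpa using this
  have hdeg := Polynomial.natDegree_le_of_dvd hdvd hne
  rw [Polynomial.natDegree_X_pow] at hdeg
  have hc : N'.esymm 2 ≠ 0 := by
    rw [he2]; exact mul_ne_zero (pow_ne_zero _ hωne) (pow_ne_zero _ hωne)
  rw [Polynomial.natDegree_C_mul_X_pow 2 _ hc] at hdeg
  omega
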